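/- Let c > 0 and consider f(x) = (1 + c/x)/(1 + c/x²) for x > 1 (where x = e^{st}, c = (1−p)/p, and the drift rate is twice the stabilizing selection rate). The maximum of f over x > 1 is attained at x = 1 + √(1+c), and if c = k − 1 (i.e. p = 1/k) then this maximum value equals (√k + 1)/2. -/

import Mathlib

theorem stmt_11 (c : ℝ) (hc : 0 < c) :
    let f := fun x : ℝ => (1 + c / x) / (1 + c / x^2)
    let x₀ := 1 + Real.sqrt (1 + c)
    (∀ x : ℝ, 1 < x → f x ≤ f x₀) ∧
    (∀ k : ℝ, c = k - 1 → f x₀ = (Real.sqrt k + 1) / 2) := by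
  intro f x₀
  set s := Real.sqrt (1 + c) with hsdef
  have hs0 : 0 < s := Real.sqrt_pos.mpr (by linarith)
  have hs2 : s ^ 2 = 1 + c := Real.sq_sqrt (by linarith)
  have hs1 : 1 < s := by nlinarith
  have hx0 : (1:ℝ) < x₀ := by simp only [x₀]; linarith
  have key : ∀ x : ℝ, 0 < x → f x = (x^2 + c*x) / (x^2 + c) := by
    intro x hx
    simp only [f]
    rw [div_eq_div_iff]
    · field_simp
    · positivity
    · positivity
  have hx0pos : (0:ℝ) < x₀ := by linarith
  constructor
  · intro x hx
    rw [key x (by linarith), key x₀ hx0pos]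
    rw [div_le_div_iff₀ (by positivity) (by positivity)]
    have hx₀ : x₀ = 1 + s := rfl
    have hid : (x₀^2 + c*x₀)*(x^2 + c) - (x^2 + c*x)*(x₀^2 + c) = c*s*(x-x₀)^2 := by
      rw [hx₀]; linear_combination (c*(x - 1 - s)) * hs2
    nlinarith [mul_nonneg (mul_pos hc hs0).le (sq_nonneg (x - x₀))]
  · intro k hk
    have hks : Real.sqrt k = s := by
      rw [hsdef]
      congr 1
      linarith
    rw [key x₀ hx0pos, hks]
    have hx₀ : x₀ = 1 + s := rfl
    rw [hx₀, div_eq_div_iff (by positivity) (by norm_num)]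
    nlinarith [hs2]
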